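/- Let C ⊆ {0,1}^N be a set of binary codewords containing the zero vector, such that any two distinct codewords are at Hamming distance at least 2t+1 for some integer t ≥ 0, and let ν be an integer with 0 ≤ ν ≤ t. For each l, let A_l denote the number of codewords of Hamming weight l. Then for every integer e with e ≥ t + ν + 1, the number of vectors y ∈ {0,1}^N with wt(y) = e for which there exists a nonzero codeword c ∈ C with d_H(c, y) ≤ t − ν equals ∑_{j=0}^{t−ν} ∑_{l} A_l · n(l, e, j), where n(l, e, j) = C(N−l, (j+e−l)/2)·C(l, (j+l−e)/2) when j+e−l is even and the arguments are within range, and n(l, e, j) = 0 otherwise. (The key point is that the Hamming balls of radius t − ν around distinct codewords are pairwise disjoint, and y cannot lie within distance t − ν of the zero codeword, so the count decomposes as a sum over nonzero codewords.) -/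

import Mathlib

open scoped Classical

/-- `wt x` is the Hamming weight of `x` (the number of `true` coordinates). -/
def wt {N : ℕ} (x : Fin N → Bool) : ℕ :=
  (Finset.univ.filter fun k => x k = true).card

/-- `nlej N l e j` is the number of weight-`e` vectors in `{0,1}^N` at Hamming
distance `j` from a fixed weight-`l` vector:
`C(N-l, (j+e-l)/2) · C(l, (j+l-e)/2)` when `j+e-l` is even and the arguments
are within range, and `0` otherwise. -/
def nlej (N l e j : ℕ) : ℕ :=
  if Even ((j : ℤ) + e - l) ∧ 0 ≤ (j : ℤ) + e - l ∧ 0 ≤ (j : ℤ) + l - e ∧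
      ((j : ℤ) + e - l) / 2 ≤ (N : ℤ) - l ∧ ((j : ℤ) + l - e) / 2 ≤ (l : ℤ) then
    (N - l).choose (((j : ℤ) + e - l) / 2).toNat *
      l.choose (((j : ℤ) + l - e) / 2).toNat
  else 0

namespace Stmt17Aux

variable {N : ℕ}

def D0 (c y : Fin N → Bool) : Finset (Fin N) :=
  Finset.univ.filter fun k => c k = false ∧ y k = true

def D1 (c y : Fin N → Bool) : Finset (Fin N) :=
  Finset.univ.filter fun k => c k = true ∧ y k = false

lemma key1 (c y : Fin N → Bool) : wt y + (D1 c y).card = wt c + (D0 c y).card := by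
  simp only [wt, D0, D1, Finset.card_filter, ← Finset.sum_add_distrib]
  refine Finset.sum_congr rfl fun k _ => ?_
  cases hc : c k <;> cases hy : y k <;> simp [hc, hy]

lemma key2 (c y : Fin N → Bool) : hammingDist c y = (D0 c y).card + (D1 c y).card := by
  show (Finset.univ.filter fun i => c i ≠ y i).card = _
  simp only [D0, D1, Finset.card_filter, ← Finset.sum_add_distrib]
  refine Finset.sum_congr rfl fun k _ => ?_
  cases hc : c k <;> cases hy : y k <;> simp [hc, hy]

lemma card_false (c : Fin N → Bool) :
    (Finset.univ.filter fun k => c k = false).card = N - wt c := by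
  have h := Finset.card_filter_add_card_filter_not
    (s := (Finset.univ : Finset (Fin N))) (p := fun k => c k = true)
  have h2 : (Finset.univ.filter fun k => ¬ c k = true)
      = (Finset.univ.filter fun k => c k = false) := by
    apply Finset.filter_congr; intro k _; simp
  rw [h2, Finset.card_univ, Fintype.card_fin] at h
  have : wt c = (Finset.univ.filter fun k => c k = true).card := rfl
  omega

lemma D0_subset (c y : Fin N → Bool) :
    D0 c y ⊆ Finset.univ.filter fun k => c k = false := by
  intro k hk; simp only [D0, Finset.mem_filter] at hk ⊢; exact ⟨hk.1, hk.2.1⟩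

lemma D1_subset (c y : Fin N → Bool) :
    D1 c y ⊆ Finset.univ.filter fun k => c k = true := by
  intro k hk; simp only [D1, Finset.mem_filter] at hk ⊢; exact ⟨hk.1, hk.2.1⟩

def g (c : Fin N → Bool) (A B : Finset (Fin N)) : Fin N → Bool :=
  fun k => if k ∈ A then true else if k ∈ B then false else c k

lemma D0_g (c : Fin N → Bool) {A B : Finset (Fin N)}
    (hA : A ⊆ Finset.univ.filter fun k => c k = false)
    (hB : B ⊆ Finset.univ.filter fun k => c k = true) :
    D0 c (g c A B) = A := by
  ext k
  rw [D0, Finset.mem_filter]; simp only [g, Finset.mem_univ, true_and]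
  constructor
  · rintro ⟨hc, hg⟩
    by_contra hkA
    rw [if_neg hkA] at hg
    by_cases hkB : k ∈ B
    · rw [if_pos hkB] at hg; exact Bool.false_ne_true hg
    · rw [if_neg hkB] at hg; rw [hc] at hg; exact Bool.false_ne_true hg
  · intro hkA
    exact ⟨(Finset.mem_filter.mp (hA hkA)).2, by rw [if_pos hkA]⟩

lemma D1_g (c : Fin N → Bool) {A B : Finset (Fin N)}
    (hA : A ⊆ Finset.univ.filter fun k => c k = false)
    (hB : B ⊆ Finset.univ.filter fun k => c k = true) :
    D1 c (g c A B) = B := by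
  ext k
  rw [D1, Finset.mem_filter]; simp only [g, Finset.mem_univ, true_and]
  constructor
  · rintro ⟨hc, hg⟩
    by_cases hkA : k ∈ A
    · have := (Finset.mem_filter.mp (hA hkA)).2
      rw [this] at hc; exact absurd hc Bool.false_ne_true
    · rw [if_neg hkA] at hg
      by_cases hkB : k ∈ B
      · exact hkB
      · rw [if_neg hkB, hc] at hg; exact absurd hg.symm Bool.false_ne_true
  · intro hkB
    have hc := (Finset.mem_filter.mp (hB hkB)).2
    have hkA : k ∉ A := fun hkA => by
      have h' := (Finset.mem_filter.mp (hA hkA)).2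
      rw [h'] at hc; exact Bool.false_ne_true hc
    exact ⟨hc, by rw [if_neg hkA, if_pos hkB]⟩

lemma countA (c : Fin N → Bool) (e j : ℕ) :
    (Finset.univ.filter fun y : Fin N → Bool =>
        wt y = e ∧ hammingDist c y = j).card = nlej N (wt c) e j := by
  set l := wt c with hl
  rw [nlej]
  split_ifs with hcond
  · obtain ⟨⟨m, hm⟩, h1, h2, h3, h4⟩ := hcond
    set a : ℕ := (((j : ℤ) + e - l) / 2).toNat with ha
    set b : ℕ := (((j : ℤ) + l - e) / 2).toNat with hb
    have hlN : l ≤ N := by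
      have := Finset.card_filter_le (Finset.univ : Finset (Fin N))
        (fun k => c k = true)
      simpa [wt, hl] using this
    have ha2 : (a : ℤ) * 2 = (j : ℤ) + e - l := by omega
    have hb2 : (b : ℤ) * 2 = (j : ℤ) + l - e := by omega
    have hal : a ≤ N - l := by omega
    have hbl : b ≤ l := by omega
    have hP : (((Finset.univ.filter fun k => c k = false).powersetCard a) ×ˢ
        ((Finset.univ.filter fun k => c k = true).powersetCard b)).card
        = (N - l).choose a * l.choose b := by
      rw [Finset.card_product, Finset.card_powersetCard, Finset.card_powersetCard,
        card_false]
      rfl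
    rw [← hP]
    apply Finset.card_bij' (fun y _ => (D0 c y, D1 c y)) (fun p _ => g c p.1 p.2)
    · intro y hy
      simp only [Finset.mem_filter, Finset.mem_univ, true_and] at hy
      obtain ⟨hwt, hd⟩ := hy
      have k1 := key1 c y
      have k2 := key2 c y
      simp only [Finset.mem_product, Finset.mem_powersetCard]
      refine ⟨⟨D0_subset c y, ?_⟩, ⟨D1_subset c y, ?_⟩⟩ <;> omega
    · intro p hp
      simp only [Finset.mem_product, Finset.mem_powersetCard] at hp
      obtain ⟨⟨hA, hAc⟩, ⟨hB, hBc⟩⟩ := hp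
      have k1 := key1 c (g c p.1 p.2)
      have k2 := key2 c (g c p.1 p.2)
      rw [D0_g c hA hB, D1_g c hA hB] at k1 k2
      simp only [Finset.mem_filter, Finset.mem_univ, true_and]
      constructor <;> omega
    · intro y hy
      funext k
      show (if k ∈ D0 c y then true else if k ∈ D1 c y then false else c k) = y k
      by_cases h0 : k ∈ D0 c y
      · rw [if_pos h0]; exact ((Finset.mem_filter.mp h0).2.2).symm
      · rw [if_neg h0]
        by_cases h1 : k ∈ D1 c y
        · rw [if_pos h1]; exact ((Finset.mem_filter.mp h1).2.2).symm
        · rw [if_neg h1]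
          simp only [D0, D1, Finset.mem_filter, Finset.mem_univ, true_and,
            not_and] at h0 h1
          cases hc : c k <;> cases hy' : y k
          · rfl
          · exact absurd hy' (h0 hc)
          · exact absurd hy' (h1 hc)
          · rfl
    · intro p hp
      simp only [Finset.mem_product, Finset.mem_powersetCard] at hp
      obtain ⟨⟨hA, _⟩, ⟨hB, _⟩⟩ := hp
      exact Prod.ext (D0_g c hA hB) (D1_g c hA hB)
  · rw [Finset.card_eq_zero, Finset.filter_eq_empty_iff]
    rintro y _ ⟨hwt, hd⟩
    have k1 := key1 c y
    have k2 := key2 c y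
    have hlN : l ≤ N := by
      have := Finset.card_filter_le (Finset.univ : Finset (Fin N))
        (fun k => c k = true)
      simpa [wt, hl] using this
    have hb1 : (D1 c y).card ≤ l := Finset.card_le_card (D1_subset c y)
    have hb0 : (D0 c y).card ≤ N - l := by
      have := Finset.card_le_card (D0_subset c y)
      rw [card_false] at this; exact this
    exact hcond ⟨⟨(D0 c y).card, by push_cast; omega⟩, by omega, by omega,
      by omega, by omega⟩

end Stmt17Aux

/-- for a code `C ⊆ {0,1}^N` containing the zero codeword with
pairwise Hamming distances at least `2t+1`, a margin `0 ≤ ν ≤ t`, weight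
distribution `A_l = #{c ∈ C : wt c = l}`, and any weight `e ≥ t + ν + 1`, the
number of weight-`e` vectors lying within distance `t - ν` of some nonzero
codeword equals `∑_{j=0}^{t-ν} ∑_l A_l · n(l,e,j)` (the balls of radius
`t - ν` around distinct codewords are pairwise disjoint, and such a `y`
cannot lie near the zero codeword). -/
theorem stmt_17 (N t ν : ℕ) (hν : ν ≤ t) (C : Finset (Fin N → Bool))
    (hzero : (fun _ => false) ∈ C)
    (hdist : ∀ c ∈ C, ∀ c' ∈ C, c ≠ c' → 2 * t + 1 ≤ hammingDist c c')
    (e : ℕ) (he : t + ν + 1 ≤ e) :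
    (Finset.univ.filter fun y : Fin N → Bool =>
        wt y = e ∧ ∃ c ∈ C, c ≠ (fun _ => false) ∧ hammingDist c y ≤ t - ν).card
    = ∑ j ∈ Finset.range (t - ν + 1), ∑ l ∈ Finset.range (N + 1),
        (C.filter fun c => wt c = l).card * nlej N l e j := by
  classical
  -- split LHS as a disjoint union over codewords
  have hsplit : (Finset.univ.filter fun y : Fin N → Bool =>
        wt y = e ∧ ∃ c ∈ C, c ≠ (fun _ => false) ∧ hammingDist c y ≤ t - ν)
      = C.biUnion (fun c => Finset.univ.filter fun y : Fin N → Bool =>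
          wt y = e ∧ c ≠ (fun _ => false) ∧ hammingDist c y ≤ t - ν) := by
    ext y
    simp only [Finset.mem_filter, Finset.mem_biUnion, Finset.mem_univ, true_and]
    constructor
    · rintro ⟨hw, c, hc, hne, hd⟩; exact ⟨c, hc, hw, hne, hd⟩
    · rintro ⟨c, hc, hw, hne, hd⟩; exact ⟨hw, c, hc, hne, hd⟩
  have hdisj : ∀ c ∈ C, ∀ c' ∈ C, c ≠ c' →
      Disjoint (Finset.univ.filter fun y : Fin N → Bool =>
          wt y = e ∧ c ≠ (fun _ => false) ∧ hammingDist c y ≤ t - ν)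
        (Finset.univ.filter fun y : Fin N → Bool =>
          wt y = e ∧ c' ≠ (fun _ => false) ∧ hammingDist c' y ≤ t - ν) := by
    intro c hc c' hc' hne
    rw [Finset.disjoint_left]
    rintro y hy hy'
    simp only [Finset.mem_filter, Finset.mem_univ, true_and] at hy hy'
    have htri : hammingDist c c' ≤ hammingDist c y + hammingDist y c' :=
      hammingDist_triangle c y c'
    rw [hammingDist_comm y c'] at htri
    have := hdist c hc c' hc' hne
    omega
  rw [hsplit, Finset.card_biUnion hdisj]
  -- per-codeword count
  have hterm : ∀ c ∈ C,
      (Finset.univ.filter fun y : Fin N → Bool =>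
        wt y = e ∧ c ≠ (fun _ => false) ∧ hammingDist c y ≤ t - ν).card
      = ∑ j ∈ Finset.range (t - ν + 1), nlej N (wt c) e j := by
    intro c _
    by_cases h0 : c = (fun _ => false)
    · have hempty : (Finset.univ.filter fun y : Fin N → Bool =>
          wt y = e ∧ c ≠ (fun _ => false) ∧ hammingDist c y ≤ t - ν) = ∅ := by
        rw [Finset.filter_eq_empty_iff]
        rintro y _ ⟨_, hne, _⟩
        exact hne h0
      rw [hempty, Finset.card_empty]
      have hwt0 : wt c = 0 := by
        subst h0; simp [wt]
      rw [hwt0]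
      refine (Finset.sum_eq_zero fun j hj => ?_).symm
      rw [Finset.mem_range] at hj
      rw [nlej, if_neg]
      rintro ⟨_, _, h2, _⟩
      omega
    · have hfe : (Finset.univ.filter fun y : Fin N → Bool =>
          wt y = e ∧ c ≠ (fun _ => false) ∧ hammingDist c y ≤ t - ν)
        = (Finset.range (t - ν + 1)).biUnion (fun j =>
            Finset.univ.filter fun y : Fin N → Bool =>
              wt y = e ∧ hammingDist c y = j) := by
        ext y
        simp only [Finset.mem_filter, Finset.mem_biUnion, Finset.mem_univ,
          Finset.mem_range, true_and, Nat.lt_succ_iff]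
        constructor
        · rintro ⟨hw, _, hd⟩; exact ⟨hammingDist c y, hd, hw, rfl⟩
        · rintro ⟨j, hj, hw, hd⟩; exact ⟨hw, h0, hd ▸ hj⟩
      rw [hfe, Finset.card_biUnion]
      · exact Finset.sum_congr rfl fun j _ => Stmt17Aux.countA c e j
      · intro j hj j' hj' hne
        rw [Function.onFun, Finset.disjoint_left]
        rintro y hy hy'
        simp only [Finset.mem_filter] at hy hy'
        exact hne (hy.2.2 ▸ hy'.2.2 ▸ rfl)
  rw [Finset.sum_congr rfl hterm, Finset.sum_comm]
  refine Finset.sum_congr rfl fun j _ => ?_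
  have hmaps : ∀ c ∈ C, wt c ∈ Finset.range (N + 1) := by
    intro c _
    rw [Finset.mem_range, Nat.lt_succ_iff]
    have := Finset.card_filter_le (Finset.univ : Finset (Fin N))
      (fun k => c k = true)
    simpa [wt] using this
  rw [← Finset.sum_fiberwise_of_maps_to hmaps (fun c => nlej N (wt c) e j)]
  refine Finset.sum_congr rfl fun l _ => ?_
  rw [Finset.sum_congr rfl (fun c hc => by
    rw [(Finset.mem_filter.mp hc).2]), Finset.sum_const, smul_eq_mul]
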